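/- For all integers m and n, with y = 3(n^2-4mn-4m^2)(5n^2+8mn+4m^2)(7n^2+12mn+4m^2), z = 32n(n+m)(n+2m)(3n+2m)(5n^2+8mn+4m^2), c1 = (7n^2+12mn+4m^2)(9n^2+20mn+12m^2)(11n^2+12mn+4m^2), and c2 = (n^2-4mn-4m^2)(3n^2+4mn+4m^2)(17n^2+28mn+12m^2), the identity 2y^2 + 2z^2 = c1^2 + c2^2 holds. -/
import Mathlib


theorem stmt_12 (m n y z c1 c2 : ℤ)
    (hy : y = 3*(n^2-4*m*n-4*m^2)*(5*n^2+8*m*n+4*m^2)*(7*n^2+12*m*n+4*m^2))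
    (hz : z = 32*n*(n+m)*(n+2*m)*(3*n+2*m)*(5*n^2+8*m*n+4*m^2))
    (hc1 : c1 = (7*n^2+12*m*n+4*m^2)*(9*n^2+20*m*n+12*m^2)*(11*n^2+12*m*n+4*m^2))
    (hc2 : c2 = (n^2-4*m*n-4*m^2)*(3*n^2+4*m*n+4*m^2)*(17*n^2+28*m*n+12*m^2)) :
    2*y^2 + 2*z^2 = c1^2 + c2^2 := by subst hy hz hc1 hc2; ring
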